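/- Let Γ be a group, Δ ≤ Γ a subgroup, and ψ : Γ → ℝ a function. The following are equivalent: (a) ψ is a Δ-invariant function of conditionally negative type; (b) there exist a real Hilbert space H, an orthogonal representation π of Γ on H, and a cocycle b for π with b(δ) = 0 for all δ ∈ Δ, such that {b(γ) : γ ∈ Γ} has dense linear span in H and ψ(γ) = ‖b(γ)‖² for all γ ∈ Γ. Moreover, in that case ψ(ρ⁻¹γ) = ‖b(γ) − b(ρ)‖² for all γ, ρ ∈ Γ. -/

import Mathlib

open scoped InnerProductSpace ComplexConjugate ComplexOrder BigOperators

section Defs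

variable {Γ : Type} [Group Γ]

/-- A complex-valued function of positive type on a group. -/
def IsPosType (φ : Γ → ℂ) : Prop :=
  ∀ (n : ℕ), 1 ≤ n → ∀ (γ : Fin n → Γ) (c : Fin n → ℂ),
    0 ≤ ∑ i, ∑ j, conj (c i) * c j * φ ((γ i)⁻¹ * γ j)

/-- A real-valued function of positive type on a group. -/
def IsRealPosType (φ : Γ → ℝ) : Prop :=
  (∀ γ : Γ, φ γ⁻¹ = φ γ) ∧
  ∀ (n : ℕ), 1 ≤ n → ∀ (γ : Fin n → Γ) (c : Fin n → ℝ),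
    0 ≤ ∑ i, ∑ j, c i * c j * φ ((γ i)⁻¹ * γ j)

/-- A complex-valued function of conditionally negative type on a group. -/
def IsCondNegType (ψ : Γ → ℂ) : Prop :=
  ψ 1 = 0 ∧ (∀ γ : Γ, ψ γ⁻¹ = conj (ψ γ)) ∧
  ∀ (n : ℕ), 2 ≤ n → ∀ (γ : Fin n → Γ) (c : Fin n → ℂ), (∑ i, c i) = 0 →
    ∑ i, ∑ j, conj (c i) * c j * ψ ((γ i)⁻¹ * γ j) ≤ 0

/-- A real-valued function of conditionally negative type on a group. -/
def IsRealCondNegType (ψ : Γ → ℝ) : Prop :=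
  ψ 1 = 0 ∧ (∀ γ : Γ, ψ γ⁻¹ = ψ γ) ∧
  ∀ (n : ℕ), 2 ≤ n → ∀ (γ : Fin n → Γ) (c : Fin n → ℝ), (∑ i, c i) = 0 →
    ∑ i, ∑ j, c i * c j * ψ ((γ i)⁻¹ * γ j) ≤ 0

/-- A function on Γ is Δ-(bi-)invariant if it is unchanged under left and right
multiplication by elements of Δ. -/
def IsInvariantUnder {α : Type*} (Δ : Subgroup Γ) (ψ : Γ → α) : Prop :=
  ∀ d₀ ∈ Δ, ∀ d₁ ∈ Δ, ∀ γ : Γ, ψ (d₀ * γ * d₁) = ψ γ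

/-- The triple Δ ≤ Λ ≤ Γ has property (T): every unitary representation of Γ with
almost invariant Δ-invariant unit vectors has a Λ-invariant unit vector. -/
def HasPropertyT (Δ Λ : Subgroup Γ) : Prop :=
  ∀ (H : Type) [NormedAddCommGroup H] [InnerProductSpace ℂ H] [CompleteSpace H]
    (π : Γ →* (H ≃ₗᵢ[ℂ] H)),
    (∀ (F : Finset Γ) (ε : ℝ), 0 < ε →
      ∃ ξ : H, ‖ξ‖ = 1 ∧ (∀ d ∈ Δ, π d ξ = ξ) ∧ ∀ γ ∈ F, ‖π γ ξ - ξ‖ ≤ ε) →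
    ∃ η : H, ‖η‖ = 1 ∧ ∀ l ∈ Λ, π l η = η

end Defs

noncomputable section Aux12

open Finsupp UniformSpace

variable {Γ : Type} [Group Γ]

def sumForm (Γ : Type) [Group Γ] : (Γ →₀ ℝ) →ₗ[ℝ] ℝ :=
  Finsupp.lsum ℝ fun _ => LinearMap.id

@[simp] lemma sumForm_single (γ : Γ) (a : ℝ) : sumForm Γ (Finsupp.single γ a) = a := by
  simp [sumForm]

lemma sumForm_apply (f : Γ →₀ ℝ) : sumForm Γ f = ∑ γ ∈ f.support, f γ := by
  simp [sumForm, Finsupp.lsum_apply, Finsupp.sum]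

def V0 {Γ : Type} [Group Γ] (ψ : Γ → ℝ) : Submodule ℝ (Γ →₀ ℝ) := LinearMap.ker (sumForm Γ)

def Bform (ψ : Γ → ℝ) : (Γ →₀ ℝ) →ₗ[ℝ] (Γ →₀ ℝ) →ₗ[ℝ] ℝ :=
  Finsupp.lsum ℝ fun γ => LinearMap.toSpanSingleton ℝ _
    (Finsupp.lsum ℝ fun ρ => LinearMap.toSpanSingleton ℝ ℝ (-ψ (γ⁻¹ * ρ) / 2))

@[simp] lemma Bform_single (ψ : Γ → ℝ) (γ ρ : Γ) (a c : ℝ) :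
    Bform ψ (Finsupp.single γ a) (Finsupp.single ρ c) = a * c * (-ψ (γ⁻¹ * ρ) / 2) := by
  simp [Bform, LinearMap.toSpanSingleton_apply, smul_eq_mul]
  ring

lemma Bform_comm (ψ : Γ → ℝ) (hsym : ∀ γ : Γ, ψ γ⁻¹ = ψ γ) (f g : Γ →₀ ℝ) :
    Bform ψ f g = Bform ψ g f := by
  have key : Bform ψ = (Bform ψ).flip := by
    refine Finsupp.lhom_ext fun γ a => Finsupp.lhom_ext fun ρ b => ?_
    have hs : ψ (ρ⁻¹ * γ) = ψ (γ⁻¹ * ρ) := by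
      rw [← hsym (ρ⁻¹ * γ)]; simp [mul_inv_rev]
    simp only [LinearMap.flip_apply, Bform_single, hs]
    ring
  conv_lhs => rw [key]
  rfl

def trG (s : Γ) : (Γ →₀ ℝ) ≃ₗ[ℝ] (Γ →₀ ℝ) := Finsupp.domLCongr (Equiv.mulLeft s)

@[simp] lemma trG_single (s γ : Γ) (a : ℝ) :
    trG s (Finsupp.single γ a) = Finsupp.single (s * γ) a := by
  simp [trG]

lemma trG_apply (s : Γ) (f : Γ →₀ ℝ) (ρ : Γ) : trG s f ρ = f (s⁻¹ * ρ) := by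
  simp [trG, Finsupp.domLCongr_apply, Finsupp.equivMapDomain_apply]

lemma trG_mul (s t : Γ) (f : Γ →₀ ℝ) : trG s (trG t f) = trG (s * t) f := by
  ext ρ; simp [trG_apply, mul_inv_rev, mul_assoc]

lemma trG_one (f : Γ →₀ ℝ) : trG (1 : Γ) f = f := by
  ext ρ; simp [trG_apply]

lemma sumForm_trG (s : Γ) (f : Γ →₀ ℝ) : sumForm Γ (trG s f) = sumForm Γ f := by
  have key : (sumForm Γ).comp ((trG s) : (Γ →₀ ℝ) →ₗ[ℝ] (Γ →₀ ℝ)) = sumForm Γ := by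
    refine Finsupp.lhom_ext fun γ a => ?_
    simp
  exact LinearMap.congr_fun key f

lemma map_trG_V0 (ψ : Γ → ℝ) (s : Γ) :
    (V0 ψ).map ((trG s) : (Γ →₀ ℝ) →ₗ[ℝ] (Γ →₀ ℝ)) = V0 ψ := by
  ext f
  simp only [Submodule.mem_map, V0, LinearMap.mem_ker]
  constructor
  · rintro ⟨g, hg, rfl⟩
    rw [LinearEquiv.coe_coe, sumForm_trG]; exact hg
  · intro hf
    refine ⟨trG s⁻¹ f, by rw [sumForm_trG]; exact hf, ?_⟩
    rw [LinearEquiv.coe_coe, trG_mul]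
    simp [trG_one]

def trV0 (ψ : Γ → ℝ) (s : Γ) : V0 ψ ≃ₗ[ℝ] V0 ψ := (trG s).ofSubmodules _ _ (map_trG_V0 ψ s)

@[simp] lemma trV0_coe (ψ : Γ → ℝ) (s : Γ) (x : V0 ψ) : (trV0 ψ s x : Γ →₀ ℝ) = trG s x := rfl

lemma Bform_trG (ψ : Γ → ℝ) (s : Γ) (f g : Γ →₀ ℝ) :
    Bform ψ (trG s f) (trG s g) = Bform ψ f g := by
  have key : ((Bform ψ).comp ((trG s) : (Γ →₀ ℝ) →ₗ[ℝ] (Γ →₀ ℝ))).compl₂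
      ((trG s) : (Γ →₀ ℝ) →ₗ[ℝ] (Γ →₀ ℝ)) = Bform ψ := by
    refine Finsupp.lhom_ext fun γ a => Finsupp.lhom_ext fun ρ b => ?_
    simp [LinearMap.compl₂_apply, mul_inv_rev, mul_assoc, inv_mul_cancel_left]
  have h1 := LinearMap.congr_fun key f
  exact LinearMap.congr_fun h1 g

lemma Bform_apply (ψ : Γ → ℝ) (f g : Γ →₀ ℝ) :
    Bform ψ f g = ∑ γ ∈ f.support, ∑ ρ ∈ g.support, f γ * g ρ * (-ψ (γ⁻¹ * ρ) / 2) := by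
  conv_lhs => rw [← Finsupp.sum_single f, ← Finsupp.sum_single g]
  rw [map_finsuppSum]
  simp only [Finsupp.sum, LinearMap.coe_sum, Finset.sum_apply, map_sum, Bform_single]
  exact Finset.sum_comm

lemma condneg_finset {ψ : Γ → ℝ} (hψ : IsRealCondNegType ψ) (t : Finset Γ) (c : Γ → ℝ)
    (hc : ∑ γ ∈ t, c γ = 0) :
    ∑ γ ∈ t, ∑ ρ ∈ t, c γ * c ρ * ψ (γ⁻¹ * ρ) ≤ 0 := by
  rcases lt_or_ge t.card 2 with hcard | hcard
  · have h01 : t.card = 0 ∨ t.card = 1 := by omega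
    rcases h01 with h0 | h1
    · rw [Finset.card_eq_zero] at h0; subst h0; simp
    · obtain ⟨a, rfl⟩ := Finset.card_eq_one.mp h1
      simp only [Finset.sum_singleton] at hc ⊢
      rw [hc]; simp
  · set e := t.equivFin with he
    have key : ∀ F : Γ → ℝ, ∑ i : Fin t.card, F (e.symm i : Γ) = ∑ x ∈ t, F x := by
      intro F
      rw [← Finset.sum_coe_sort t F]
      exact Fintype.sum_equiv e.symm (fun i => F (e.symm i)) (fun x => F x) (fun i => rfl)
    have h := hψ.2.2 t.card hcard (fun i => (e.symm i : Γ)) (fun i => c (e.symm i))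
      (by rw [key fun x => c x]; exact hc)
    have h2 : ∑ i : Fin t.card, ∑ j : Fin t.card,
        c (e.symm i) * c (e.symm j) * ψ ((e.symm i : Γ)⁻¹ * (e.symm j : Γ))
        = ∑ γ ∈ t, ∑ ρ ∈ t, c γ * c ρ * ψ (γ⁻¹ * ρ) := by
      calc ∑ i : Fin t.card, ∑ j : Fin t.card,
          c (e.symm i) * c (e.symm j) * ψ ((e.symm i : Γ)⁻¹ * (e.symm j : Γ))
          = ∑ i : Fin t.card, ∑ ρ ∈ t, c (e.symm i) * c ρ * ψ ((e.symm i : Γ)⁻¹ * ρ) :=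
            Finset.sum_congr rfl fun i _ =>
              key fun ρ => c (e.symm i) * c ρ * ψ ((e.symm i : Γ)⁻¹ * ρ)
        _ = ∑ γ ∈ t, ∑ ρ ∈ t, c γ * c ρ * ψ (γ⁻¹ * ρ) :=
            key fun γ => ∑ ρ ∈ t, c γ * c ρ * ψ (γ⁻¹ * ρ)
    rw [← h2]
    exact h

lemma Bform_nonneg {ψ : Γ → ℝ} (hψ : IsRealCondNegType ψ) (f : Γ →₀ ℝ) (hf : f ∈ V0 ψ) :
    0 ≤ Bform ψ f f := by
  have hc : ∑ γ ∈ f.support, f γ = 0 := by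
    have := hf
    simp only [V0, LinearMap.mem_ker] at this
    rwa [sumForm_apply] at this
  have h := condneg_finset hψ f.support f hc
  rw [Bform_apply]
  have hr : ∑ γ ∈ f.support, ∑ ρ ∈ f.support, f γ * f ρ * (-ψ (γ⁻¹ * ρ) / 2)
      = (-(1:ℝ)/2) * ∑ γ ∈ f.support, ∑ ρ ∈ f.support, f γ * f ρ * ψ (γ⁻¹ * ρ) := by
    rw [Finset.mul_sum]
    refine Finset.sum_congr rfl fun γ _ => ?_
    rw [Finset.mul_sum]
    exact Finset.sum_congr rfl fun ρ _ => by ring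
  rw [hr]
  nlinarith [h]

def bV0 (ψ : Γ → ℝ) (γ : Γ) : V0 ψ :=
  ⟨Finsupp.single γ 1 - Finsupp.single 1 1, by
    simp [V0, LinearMap.mem_ker, map_sub]⟩

lemma Bform_bV0 (ψ : Γ → ℝ) (h1 : ψ 1 = 0) (hsym : ∀ γ : Γ, ψ γ⁻¹ = ψ γ) (γ ρ : Γ) :
    Bform ψ (bV0 ψ γ : Γ →₀ ℝ) (bV0 ψ ρ : Γ →₀ ℝ) = (ψ γ + ψ ρ - ψ (γ⁻¹ * ρ)) / 2 := by
  simp only [bV0, map_sub, LinearMap.sub_apply, Bform_single]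
  rw [show γ⁻¹ * (1:Γ) = γ⁻¹ by simp, show (1:Γ)⁻¹ * ρ = ρ by simp,
    show (1:Γ)⁻¹ * 1 = (1:Γ) by simp, hsym γ, h1]
  ring

lemma bV0_decomp {ψ : Γ → ℝ} (x : V0 ψ) :
    x = ∑ γ ∈ (x : Γ →₀ ℝ).support, (x : Γ →₀ ℝ) γ • bV0 ψ γ := by
  have hx : ∑ γ ∈ (x : Γ →₀ ℝ).support, (x : Γ →₀ ℝ) γ = 0 := by
    have := x.2
    simp only [V0, LinearMap.mem_ker] at this
    rwa [sumForm_apply] at this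
  apply Subtype.ext
  simp only [AddSubmonoidClass.coe_finset_sum, SetLike.val_smul, bV0, smul_sub]
  rw [Finset.sum_sub_distrib]
  have h1 : ∑ γ ∈ (x : Γ →₀ ℝ).support, (x : Γ →₀ ℝ) γ • Finsupp.single γ (1:ℝ)
      = (x : Γ →₀ ℝ) := by
    conv_rhs => rw [← Finsupp.sum_single (x : Γ →₀ ℝ)]
    simp [Finsupp.sum, Finsupp.smul_single]
  have h2 : ∑ γ ∈ (x : Γ →₀ ℝ).support, (x : Γ →₀ ℝ) γ • Finsupp.single (1:Γ) (1:ℝ)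
      = 0 := by
    rw [← Finset.sum_smul, hx, zero_smul]
  rw [h1, h2, sub_zero]

end Aux12


noncomputable section Construct12
set_option synthInstance.maxHeartbeats 1000000

open Finsupp UniformSpace

variable {Γ : Type} [Group Γ] {ψ : Γ → ℝ} [hψf : Fact (IsRealCondNegType ψ)]

def coreV0 (ψ : Γ → ℝ) [hψf : Fact (IsRealCondNegType ψ)] :
    PreInnerProductSpace.Core ℝ (V0 ψ) where
  inner x y := Bform ψ (x : Γ →₀ ℝ) (y : Γ →₀ ℝ)
  conj_inner_symm x y := by
    simpa using Bform_comm ψ hψf.out.2.1 (y : Γ →₀ ℝ) (x : Γ →₀ ℝ)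
  re_inner_nonneg x := by
    simpa using Bform_nonneg hψf.out (x : Γ →₀ ℝ) x.2
  add_left x y z := by
    simp only [Submodule.coe_add, map_add, LinearMap.add_apply]
  smul_left x y r := by
    simp only [SetLike.val_smul, map_smul, LinearMap.smul_apply, smul_eq_mul,
      starRingEnd_apply, star_trivial]

@[local instance, reducible] def semiV0 : SeminormedAddCommGroup (V0 ψ) :=
  @InnerProductSpace.Core.toSeminormedAddCommGroup ℝ (V0 ψ) _ _ _ (coreV0 ψ)

@[local instance, reducible] def nsV0 : NormedSpace ℝ (V0 ψ) :=
  @InnerProductSpace.Core.toNormedSpace ℝ (V0 ψ) _ _ _ (coreV0 ψ)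

@[local instance, reducible] def ipsV0 : InnerProductSpace ℝ (V0 ψ) where
  toNormedSpace := nsV0
  toInner := (coreV0 ψ).toInner
  norm_sq_eq_re_inner x := by
    have hx : ‖x‖ = Real.sqrt (RCLike.re ((coreV0 ψ).inner x x)) := rfl
    rw [hx, Real.sq_sqrt]
    exact Bform_nonneg hψf.out (x : Γ →₀ ℝ) x.2
  conj_inner_symm := (coreV0 ψ).conj_inner_symm
  add_left := (coreV0 ψ).add_left
  smul_left := (coreV0 ψ).smul_left

lemma inner_V0 (x y : V0 ψ) : ⟪x, y⟫_ℝ = Bform ψ (x : Γ →₀ ℝ) (y : Γ →₀ ℝ) := rfl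

lemma normsq_V0 (x : V0 ψ) : ‖x‖ ^ 2 = Bform ψ (x : Γ →₀ ℝ) (x : Γ →₀ ℝ) :=
  (real_inner_self_eq_norm_sq x).symm.trans (inner_V0 x x)

def TIso (ψ : Γ → ℝ) [Fact (IsRealCondNegType ψ)] (s : Γ) : (V0 ψ) ≃ₗᵢ[ℝ] (V0 ψ) where
  toLinearEquiv := trV0 ψ s
  norm_map' x := by
    have h2 : ‖trV0 ψ s x‖ ^ 2 = ‖x‖ ^ 2 := by
      rw [normsq_V0, normsq_V0, trV0_coe ψ]
      exact Bform_trG ψ s _ _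
    have h3 := congrArg Real.sqrt h2
    rwa [Real.sqrt_sq (norm_nonneg _), Real.sqrt_sq (norm_nonneg _)] at h3

lemma TIso_mul (s t : Γ) (x : V0 ψ) : TIso ψ s (TIso ψ t x) = TIso ψ (s * t) x := by
  apply Subtype.ext
  show (trV0 ψ s (trV0 ψ t x) : Γ →₀ ℝ) = (trV0 ψ (s * t) x : Γ →₀ ℝ)
  rw [trV0_coe ψ, trV0_coe ψ, trV0_coe ψ, trG_mul]

lemma TIso_one (x : V0 ψ) : TIso ψ 1 x = x := by
  apply Subtype.ext
  show (trV0 ψ 1 x : Γ →₀ ℝ) = (x : Γ →₀ ℝ)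
  rw [trV0_coe ψ, trG_one]

lemma ucTI (s : Γ) : UniformContinuous (TIso ψ s) :=
  (TIso ψ s).isometry.uniformContinuous

lemma PCmap_comp (s t : Γ) (x : Completion (V0 ψ)) :
    Completion.map (TIso ψ s) (Completion.map (TIso ψ t) x)
      = Completion.map (TIso ψ (s * t)) x := by
  refine Completion.induction_on x (isClosed_eq
    (Completion.continuous_map.comp Completion.continuous_map) Completion.continuous_map)
    fun a => ?_
  rw [Completion.map_coe (ucTI t) a, Completion.map_coe (ucTI s) (TIso ψ t a),
    Completion.map_coe (ucTI (s * t)) a, TIso_mul]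

lemma PCmap_one (x : Completion (V0 ψ)) :
    Completion.map (TIso ψ (1 : Γ)) x = x := by
  refine Completion.induction_on x (isClosed_eq Completion.continuous_map continuous_id)
    fun a => ?_
  rw [Completion.map_coe (ucTI 1) a, TIso_one]

def PCiso (ψ : Γ → ℝ) [Fact (IsRealCondNegType ψ)] (s : Γ) :
    Completion (V0 ψ) ≃ₗᵢ[ℝ] Completion (V0 ψ) where
  toFun := Completion.map (TIso ψ s)
  invFun := Completion.map (TIso ψ s⁻¹)
  map_add' x y := by
    refine Completion.induction_on₂ x y (isClosed_eq
      (Completion.continuous_map.comp (continuous_fst.add continuous_snd))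
      (((Completion.continuous_map (f := TIso ψ s)).comp continuous_fst).add
        ((Completion.continuous_map (f := TIso ψ s)).comp continuous_snd) :)) fun a b => ?_
    rw [← Completion.coe_add, Completion.map_coe (ucTI s) (a + b),
      Completion.map_coe (ucTI s) a, Completion.map_coe (ucTI s) b,
      ← Completion.coe_add, map_add]
  map_smul' r x := by
    simp only [RingHom.id_apply]
    refine Completion.induction_on x (isClosed_eq
      (Completion.continuous_map.comp (continuous_const_smul r))
      ((Completion.continuous_map (f := TIso ψ s)).const_smul r :)) fun a => ?_
    rw [← Completion.coe_smul, Completion.map_coe (ucTI s) (r • a),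
      Completion.map_coe (ucTI s) a, ← Completion.coe_smul, map_smul]
  left_inv x := by
    show Completion.map (⇑(TIso ψ s⁻¹)) (Completion.map (⇑(TIso ψ s)) x) = x
    rw [PCmap_comp, inv_mul_cancel, PCmap_one]
  right_inv x := by
    show Completion.map (⇑(TIso ψ s)) (Completion.map (⇑(TIso ψ s⁻¹)) x) = x
    rw [PCmap_comp, mul_inv_cancel, PCmap_one]
  norm_map' x := by
    show ‖Completion.map (⇑(TIso ψ s)) x‖ = ‖x‖
    refine Completion.induction_on x (isClosed_eq
      (continuous_norm.comp Completion.continuous_map) continuous_norm) fun a => ?_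
    rw [Completion.map_coe (ucTI s) a, Completion.norm_coe, Completion.norm_coe,
      (TIso ψ s).norm_map]

lemma PCiso_coe (s : Γ) (a : V0 ψ) :
    PCiso ψ s ((a : V0 ψ) : Completion (V0 ψ)) = ((TIso ψ s a : V0 ψ) : Completion (V0 ψ)) :=
  Completion.map_coe (ucTI s) a

def piRep (ψ : Γ → ℝ) [Fact (IsRealCondNegType ψ)] :
    Γ →* (Completion (V0 ψ) ≃ₗᵢ[ℝ] Completion (V0 ψ)) where
  toFun := PCiso ψ
  map_one' := by
    apply LinearIsometryEquiv.ext
    intro x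
    exact PCmap_one x
  map_mul' s t := by
    apply LinearIsometryEquiv.ext
    intro x
    exact (PCmap_comp s t x).symm

lemma norm_bV0 (γ : Γ) : ‖((bV0 ψ γ : V0 ψ) : Completion (V0 ψ))‖ ^ 2 = ψ γ := by
  rw [Completion.norm_coe, normsq_V0, Bform_bV0 ψ hψf.out.1 hψf.out.2.1,
    inv_mul_cancel, hψf.out.1]
  ring

def bC (ψ : Γ → ℝ) [Fact (IsRealCondNegType ψ)] (γ : Γ) : Completion (V0 ψ) :=
  ((bV0 ψ γ : V0 ψ) : Completion (V0 ψ))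

lemma bC_cocycle (γ ρ : Γ) : bC ψ (γ * ρ) = bC ψ γ + piRep ψ γ (bC ψ ρ) := by
  have hv : bV0 ψ (γ * ρ) = bV0 ψ γ + TIso ψ γ (bV0 ψ ρ) := by
    apply Subtype.ext
    rw [Submodule.coe_add]
    show (Finsupp.single (γ * ρ) 1 - Finsupp.single 1 1 : Γ →₀ ℝ)
      = (Finsupp.single γ 1 - Finsupp.single 1 1)
        + trG γ (Finsupp.single ρ 1 - Finsupp.single 1 1)
    rw [map_sub, trG_single, trG_single, mul_one]
    abel
  have hπ : (piRep ψ γ) (((bV0 ψ ρ : V0 ψ) : Completion (V0 ψ)))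
      = ((TIso ψ γ (bV0 ψ ρ) : V0 ψ) : Completion (V0 ψ)) := PCiso_coe γ (bV0 ψ ρ)
  show ((bV0 ψ (γ * ρ) : V0 ψ) : Completion (V0 ψ))
    = ((bV0 ψ γ : V0 ψ) : Completion (V0 ψ)) + piRep ψ γ ((bV0 ψ ρ : V0 ψ) : Completion (V0 ψ))
  rw [hv, Completion.coe_add, hπ]

lemma bC_delta (Δ : Subgroup Γ) (hinv : IsInvariantUnder Δ ψ) (d : Γ) (hd : d ∈ Δ) :
    bC ψ d = 0 := by
  have hψd : ψ d = 0 := by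
    have h := hinv d hd 1 (one_mem Δ) 1
    rw [mul_one, mul_one, hψf.out.1] at h
    exact h
  have hnz : ‖bC ψ d‖ = 0 := by
    have hsq := norm_bV0 (ψ := ψ) d
    rw [hψd] at hsq
    have h3 := congrArg Real.sqrt hsq
    rwa [Real.sqrt_sq (norm_nonneg _), Real.sqrt_zero] at h3
  exact norm_eq_zero.mp hnz

lemma bC_dense :
    (Submodule.span ℝ (Set.range (bC ψ))).topologicalClosure = ⊤ := by
  have hcs : ∀ (s : Finset Γ) (g : Γ → V0 ψ) (cf : Γ → ℝ),
      ((↑(∑ γ ∈ s, cf γ • g γ) : Completion (V0 ψ)))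
        = ∑ γ ∈ s, cf γ • ((g γ : V0 ψ) : Completion (V0 ψ)) := by
    intro s g cf
    classical
    induction s using Finset.induction with
    | empty =>
      simp only [Finset.sum_empty]
      exact Completion.coe_zero
    | insert _ _ h ih =>
      rw [Finset.sum_insert h, Finset.sum_insert h, Completion.coe_add,
        Completion.coe_smul, ih]
  have hmem : ∀ x : V0 ψ, ((x : V0 ψ) : Completion (V0 ψ)) ∈
      Submodule.span ℝ (Set.range (bC ψ)) := by
    intro x
    have hd := bV0_decomp x
    have hcoe : ((x : V0 ψ) : Completion (V0 ψ))
        = ∑ γ ∈ (x : Γ →₀ ℝ).support, (x : Γ →₀ ℝ) γ • bC ψ γ := by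
      conv_lhs => rw [hd]
      exact hcs _ _ _
    rw [hcoe]
    exact Submodule.sum_mem _ fun γ _ =>
      Submodule.smul_mem _ _ (Submodule.subset_span ⟨γ, rfl⟩)
  have hsub : Set.range ((↑) : V0 ψ → Completion (V0 ψ)) ⊆
      ↑(Submodule.span ℝ (Set.range (bC ψ))) := by
    rintro _ ⟨x, rfl⟩
    exact hmem x
  have hden : Dense (↑(Submodule.span ℝ (Set.range (bC ψ))) : Set (Completion (V0 ψ))) :=
    Completion.denseRange_coe.mono hsub
  exact Submodule.dense_iff_topologicalClosure_eq_top.mp hden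

lemma bC_norm (γ : Γ) : ψ γ = ‖bC ψ γ‖ ^ 2 := (norm_bV0 γ).symm

lemma forwardConstruction (Δ : Subgroup Γ) (hinv : IsInvariantUnder Δ ψ) :
    ∃ (H : Type) (_ : NormedAddCommGroup H) (_ : InnerProductSpace ℝ H)
      (_ : CompleteSpace H) (π : Γ →* (H ≃ₗᵢ[ℝ] H)) (b : Γ → H),
      (∀ γ ρ : Γ, b (γ * ρ) = b γ + π γ (b ρ)) ∧
      (∀ d ∈ Δ, b d = 0) ∧
      (Submodule.span ℝ (Set.range b)).topologicalClosure = ⊤ ∧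
      ∀ γ : Γ, ψ γ = ‖b γ‖ ^ 2 :=
  ⟨Completion (V0 ψ), inferInstance, inferInstance, inferInstance, piRep ψ, bC ψ,
    bC_cocycle, bC_delta Δ hinv, bC_dense, bC_norm⟩

end Construct12

set_option maxHeartbeats 2000000 in
/-- ψ is a Δ-invariant real function of conditionally negative type iff
ψ(γ) = ‖b(γ)‖² for a Δ-trivial cocycle b with dense span into an orthogonal representation;
moreover, for any such data, ψ(ρ⁻¹γ) = ‖b(γ) - b(ρ)‖². -/
theorem stmt12 (Γ : Type) [Group Γ] (Δ : Subgroup Γ) (ψ : Γ → ℝ) :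
    ((IsRealCondNegType ψ ∧ IsInvariantUnder Δ ψ) ↔
      ∃ (H : Type) (_ : NormedAddCommGroup H) (_ : InnerProductSpace ℝ H)
        (_ : CompleteSpace H) (π : Γ →* (H ≃ₗᵢ[ℝ] H)) (b : Γ → H),
        (∀ γ ρ : Γ, b (γ * ρ) = b γ + π γ (b ρ)) ∧
        (∀ d ∈ Δ, b d = 0) ∧
        (Submodule.span ℝ (Set.range b)).topologicalClosure = ⊤ ∧
        ∀ γ : Γ, ψ γ = ‖b γ‖ ^ 2) ∧
    (∀ (H : Type) [NormedAddCommGroup H] [InnerProductSpace ℝ H] [CompleteSpace H]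
      (π : Γ →* (H ≃ₗᵢ[ℝ] H)) (b : Γ → H),
      (∀ γ ρ : Γ, b (γ * ρ) = b γ + π γ (b ρ)) →
      (∀ d ∈ Δ, b d = 0) →
      (Submodule.span ℝ (Set.range b)).topologicalClosure = ⊤ →
      (∀ γ : Γ, ψ γ = ‖b γ‖ ^ 2) →
      ∀ γ ρ : Γ, ψ (ρ⁻¹ * γ) = ‖b γ - b ρ‖ ^ 2) := by
  have part2 : ∀ (H : Type) [NormedAddCommGroup H] [InnerProductSpace ℝ H] [CompleteSpace H]
      (π : Γ →* (H ≃ₗᵢ[ℝ] H)) (b : Γ → H),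
      (∀ γ ρ : Γ, b (γ * ρ) = b γ + π γ (b ρ)) →
      (∀ d ∈ Δ, b d = 0) →
      (Submodule.span ℝ (Set.range b)).topologicalClosure = ⊤ →
      (∀ γ : Γ, ψ γ = ‖b γ‖ ^ 2) →
      ∀ γ ρ : Γ, ψ (ρ⁻¹ * γ) = ‖b γ - b ρ‖ ^ 2 := by
    intro H _ _ _ π b hcoc _ _ hnorm γ ρ
    have h1 := hcoc ρ (ρ⁻¹ * γ)
    rw [mul_inv_cancel_left] at h1
    have h2 : (π ρ) (b (ρ⁻¹ * γ)) = b γ - b ρ := by rw [h1]; abel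
    rw [hnorm, ← (π ρ).norm_map (b (ρ⁻¹ * γ)), h2]
  refine ⟨⟨?_, ?_⟩, part2⟩
  · rintro ⟨hψ, hinv⟩
    haveI : Fact (IsRealCondNegType ψ) := ⟨hψ⟩
    exact forwardConstruction Δ hinv
  · rintro ⟨H, _, _, _, π, b, hcoc, hΔ, hdense, hnorm⟩
    have hmore := part2 H π b hcoc hΔ hdense hnorm
    have hb1 : b 1 = 0 := by
      have h := hcoc 1 1
      rw [mul_one, map_one π] at h
      simp only [LinearIsometryEquiv.coe_one, id_eq] at h
      exact (left_eq_add.mp h)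
    constructor
    · refine ⟨by rw [hnorm 1, hb1]; simp, fun γ => ?_, ?_⟩
      · have h := hmore 1 γ
        rw [mul_one, hb1] at h
        rw [h, hnorm γ]
        rw [zero_sub, norm_neg]
      · intro n hn γs c hc
        have hexp : ∀ i j : Fin n, c i * c j * ψ ((γs i)⁻¹ * γs j)
            = c i * c j * ‖b (γs j)‖ ^ 2 + c i * c j * ‖b (γs i)‖ ^ 2
              - 2 * ⟪c i • b (γs i), c j • b (γs j)⟫_ℝ := by
          intro i j
          rw [hmore (γs j) (γs i), norm_sub_sq_real, real_inner_smul_left,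
            real_inner_smul_right, real_inner_comm (b (γs j)) (b (γs i))]
          ring
        have hA : ∑ i, ∑ j, c i * c j * ‖b (γs j)‖ ^ 2 = 0 := by
          have h0 : ∀ i : Fin n, ∑ j, c i * c j * ‖b (γs j)‖ ^ 2
              = c i * ∑ j, c j * ‖b (γs j)‖ ^ 2 := by
            intro i; rw [Finset.mul_sum]
            exact Finset.sum_congr rfl fun j _ => by ring
          rw [Finset.sum_congr rfl fun i _ => h0 i, ← Finset.sum_mul, hc, zero_mul]
        have hB : ∑ i, ∑ j, c i * c j * ‖b (γs i)‖ ^ 2 = 0 := by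
          have h0 : ∀ i : Fin n, ∑ j, c i * c j * ‖b (γs i)‖ ^ 2
              = (c i * ‖b (γs i)‖ ^ 2) * ∑ j, c j := by
            intro i; rw [Finset.mul_sum]
            exact Finset.sum_congr rfl fun j _ => by ring
          rw [Finset.sum_congr rfl fun i _ => h0 i]
          simp [hc]
        have hC : ∑ i, ∑ j, ⟪c i • b (γs i), c j • b (γs j)⟫_ℝ
            = ⟪∑ i, c i • b (γs i), ∑ i, c i • b (γs i)⟫_ℝ := by
          rw [sum_inner]
          exact Finset.sum_congr rfl fun i _ => (inner_sum _ _ _).symm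
        have split : ∑ i, ∑ j, (c i * c j * ‖b (γs j)‖ ^ 2 + c i * c j * ‖b (γs i)‖ ^ 2
              - 2 * ⟪c i • b (γs i), c j • b (γs j)⟫_ℝ)
            = (∑ i, ∑ j, c i * c j * ‖b (γs j)‖ ^ 2)
              + (∑ i, ∑ j, c i * c j * ‖b (γs i)‖ ^ 2)
              - 2 * ∑ i, ∑ j, ⟪c i • b (γs i), c j • b (γs j)⟫_ℝ := by
          rw [Finset.mul_sum, ← Finset.sum_add_distrib, ← Finset.sum_sub_distrib]
          refine Finset.sum_congr rfl fun i _ => ?_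
          rw [Finset.mul_sum, ← Finset.sum_add_distrib, ← Finset.sum_sub_distrib]
        rw [Finset.sum_congr rfl fun i _ => Finset.sum_congr rfl fun j _ => hexp i j,
          split, hA, hB, hC]
        have hnn : (0:ℝ) ≤ ⟪∑ i, c i • b (γs i), ∑ i, c i • b (γs i)⟫_ℝ :=
          real_inner_self_nonneg
        linarith
    · intro d₀ h₀ d₁ h₁ γ
      have e1 : b (d₀ * γ * d₁) = (π d₀) (b γ) := by
        rw [mul_assoc, hcoc d₀ (γ * d₁), hcoc γ d₁, hΔ d₁ h₁, hΔ d₀ h₀]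
        simp
      rw [hnorm, hnorm, e1, (π d₀).norm_map]
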